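/- Let Jₖ denote the Jacobsthal numbers with J₁ = J₂ = 1 and Jₖ = J_{k-1} + 2J_{k-2} for k ≥ 3, and let n > 3. Then det(circ(J₁, J₂, …, Jₙ)) = (1 - Jₙ)(1 - J_{n+1})^{n-2} + Σ_{k=2}^{n-1} (J_{k+1} - Jₖ)(1 - J_{n+1})^{k-2}(2Jₙ)^{n-k}. -/

import Mathlib

open Matrix Finset

/-- Auxiliary unipotent column-operation matrix encoding the Jacobsthal recurrence. -/
def JEmat (n : ℕ) : Matrix (Fin n) (Fin n) ℝ :=
  Matrix.of fun i j =>
    (if (i : ℕ) = (j : ℕ) then 1 else 0) +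
    (if 2 ≤ (j : ℕ) ∧ (i : ℕ) + 1 = (j : ℕ) then -1 else 0) +
    (if (i : ℕ) + 2 = (j : ℕ) then -2 else 0)

/-- Auxiliary almost-bidiagonal matrix. -/
def JBmat (n : ℕ) (u v : ℕ → ℝ) (x y : ℝ) : Matrix (Fin n) (Fin n) ℝ :=
  Matrix.of fun i j =>
    if (j : ℕ) = 0 then u i
    else if (j : ℕ) = 1 then v i
    else if (i : ℕ) = (j : ℕ) then x
    else if (i : ℕ) + 1 = (j : ℕ) then y
    else 0

lemma det_JEmat (n : ℕ) : (JEmat n).det = 1 := by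
  rw [Matrix.det_of_upperTriangular (M := JEmat n) ?_]
  · have h : ∀ i : Fin n, (JEmat n) i i = 1 := by
      intro i
      show (if (i:ℕ) = (i:ℕ) then (1:ℝ) else 0) +
        (if 2 ≤ (i:ℕ) ∧ (i:ℕ) + 1 = (i:ℕ) then -1 else 0) +
        (if (i:ℕ) + 2 = (i:ℕ) then -2 else 0) = 1
      rw [if_pos rfl, if_neg (by omega), if_neg (by omega)]
      ring
    simp only [h]
    simp
  · intro i j hij
    simp only [id] at hij
    rw [Fin.lt_def] at hij
    simp only [JEmat, Matrix.of_apply]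
    rw [if_neg (by omega), if_neg (by omega), if_neg (by omega)]
    ring

lemma JB_minor_last (N : ℕ) (u v : ℕ → ℝ) (x y : ℝ) :
    (JBmat (N+1) u v x y).submatrix (Fin.last N).succAbove (Fin.last N).succAbove
      = JBmat N u v x y := by
  ext i j
  simp only [JBmat, Matrix.submatrix_apply, Matrix.of_apply, Fin.succAbove_last, Fin.coe_castSucc]

lemma JB_minor_zero_det (N : ℕ) (hN : 1 ≤ N) (u v : ℕ → ℝ) (x y : ℝ) :
    ((JBmat (N+1) u v x y).submatrix (Fin.last N).succAbove
      (Fin.succAbove 0)).det = v 0 * y ^ (N - 1) := by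
  obtain ⟨m, rfl⟩ : ∃ m, N = m + 1 := ⟨N - 1, by omega⟩
  set M := (JBmat (m+1+1) u v x y).submatrix (Fin.last (m+1)).succAbove (Fin.succAbove 0)
    with hM
  have hMe : ∀ i j : Fin (m+1), M i j =
      if (j : ℕ) = 0 then v i
      else if (i : ℕ) = (j : ℕ) + 1 then x
      else if (i : ℕ) = (j : ℕ) then y else 0 := by
    intro i j
    simp only [hM, Matrix.submatrix_apply, Fin.succAbove_last, Fin.succAbove_zero, JBmat,
      Matrix.of_apply, Fin.val_succ, Fin.coe_castSucc]
    rcases Nat.eq_zero_or_pos (j : ℕ) with h | h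
    · simp [h]
    · rw [if_neg (show ¬((j:ℕ)+1 = 0) by omega), if_neg (show ¬((j:ℕ)+1 = 1) by omega),
        if_neg (show ¬((j:ℕ) = 0) by omega)]
      by_cases hij : (i : ℕ) = (j : ℕ) + 1
      · rw [if_pos hij, if_pos hij]
      · rw [if_neg hij, if_neg hij]
        by_cases hij2 : (i : ℕ) = (j : ℕ)
        · rw [if_pos (show (i:ℕ)+1 = (j:ℕ)+1 by omega), if_pos hij2]
        · rw [if_neg (show ¬((i:ℕ)+1 = (j:ℕ)+1) by omega), if_neg hij2]
  rw [Matrix.det_of_lowerTriangular M ?_]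
  · rw [Fin.prod_univ_succ]
    have h1 : M 0 0 = v 0 := by rw [hMe]; simp
    have h2 : ∀ i : Fin m, M i.succ i.succ = y := by
      intro i; rw [hMe]; simp
    rw [h1]
    simp only [h2]
    rw [Finset.prod_const]
    simp
  · intro i j hij
    simp only [OrderDual.toDual_lt_toDual] at hij
    rw [Fin.lt_def] at hij
    rw [hMe]
    rw [if_neg (by omega), if_neg (by omega), if_neg (by omega)]

lemma JB_minor_one_det (N : ℕ) (hN : 1 ≤ N) (u v : ℕ → ℝ) (x y : ℝ) :
    ((JBmat (N+1) u v x y).submatrix (Fin.last N).succAbove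
      (Fin.succAbove 1)).det = u 0 * y ^ (N - 1) := by
  obtain ⟨m, rfl⟩ : ∃ m, N = m + 1 := ⟨N - 1, by omega⟩
  have h1v : ((1 : Fin (m+2)) : ℕ) = 1 := by
    rw [Fin.val_one']; exact Nat.mod_eq_of_lt (by omega)
  have hcol : ∀ j : Fin (m+1), (((1 : Fin (m+2)).succAbove j) : ℕ) =
      if (j : ℕ) = 0 then 0 else (j : ℕ) + 1 := by
    intro j
    simp only [Fin.succAbove]
    by_cases h : (j : ℕ) = 0
    · rw [if_pos (show Fin.castSucc j < 1 by
        rw [Fin.lt_def, h1v, Fin.coe_castSucc]; omega), if_pos h, Fin.coe_castSucc, h]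
    · rw [if_neg (show ¬(Fin.castSucc j < 1) by
        rw [Fin.lt_def, h1v, Fin.coe_castSucc]; omega), if_neg h, Fin.val_succ]
  set M := (JBmat (m+1+1) u v x y).submatrix (Fin.last (m+1)).succAbove (Fin.succAbove 1)
    with hM
  have hMe : ∀ i j : Fin (m+1), M i j =
      if (j : ℕ) = 0 then u i
      else if (i : ℕ) = (j : ℕ) + 1 then x
      else if (i : ℕ) = (j : ℕ) then y else 0 := by
    intro i j
    simp only [hM, Matrix.submatrix_apply, Fin.succAbove_last, JBmat,
      Matrix.of_apply, Fin.coe_castSucc, hcol j]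
    rcases Nat.eq_zero_or_pos (j : ℕ) with h | h
    · simp [h]
    · rw [show (if (j:ℕ) = 0 then 0 else (j:ℕ)+1) = (j:ℕ)+1 from if_neg (by omega)]
      rw [if_neg (show ¬((j:ℕ)+1 = 0) by omega), if_neg (show ¬((j:ℕ)+1 = 1) by omega),
        if_neg (show ¬((j:ℕ) = 0) by omega)]
      by_cases hij : (i : ℕ) = (j : ℕ) + 1
      · rw [if_pos hij, if_pos hij]
      · rw [if_neg hij, if_neg hij]
        by_cases hij2 : (i : ℕ) = (j : ℕ)
        · rw [if_pos (show (i:ℕ)+1 = (j:ℕ)+1 by omega), if_pos hij2]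
        · rw [if_neg (show ¬((i:ℕ)+1 = (j:ℕ)+1) by omega), if_neg hij2]
  rw [Matrix.det_of_lowerTriangular M ?_]
  · rw [Fin.prod_univ_succ]
    have h1 : M 0 0 = u 0 := by rw [hMe]; simp
    have h2 : ∀ i : Fin m, M i.succ i.succ = y := by
      intro i; rw [hMe]; simp
    rw [h1]
    simp only [h2]
    rw [Finset.prod_const]
    simp
  · intro i j hij
    simp only [OrderDual.toDual_lt_toDual] at hij
    rw [Fin.lt_def] at hij
    rw [hMe]
    rw [if_neg (by omega), if_neg (by omega), if_neg (by omega)]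

lemma det_JBmat (u v : ℕ → ℝ) (x y : ℝ) :
    ∀ n, 2 ≤ n → (JBmat n u v x y).det =
      ∑ k ∈ Icc 1 (n - 1),
        (-1) ^ (k + 1) * y ^ (k - 1) * x ^ (n - 1 - k) * (u 0 * v k - v 0 * u k) := by
  refine Nat.le_induction ?_ ?_
  · rw [Matrix.det_fin_two]
    simp [JBmat]
  · intro n hn IH
    obtain ⟨m, rfl⟩ : ∃ m, n = m + 1 := ⟨n - 1, by omega⟩
    have hm : 1 ≤ m := by omega
    have h1 : ((1 : Fin (m + 1 + 1)) : ℕ) = 1 := by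
      rw [Fin.val_one']; exact Nat.mod_eq_of_lt (by omega)
    have h0 : ((0 : Fin (m + 1 + 1)) : ℕ) = 0 := rfl
    rw [Matrix.det_succ_row _ (Fin.last (m+1))]
    have hzero : ∀ j ∈ (univ : Finset (Fin (m + 1 + 1))),
        j ∉ ({0, 1, Fin.last (m+1)} : Finset (Fin (m + 1 + 1))) →
        (-1 : ℝ) ^ ((Fin.last (m+1) : ℕ) + (j : ℕ)) * (JBmat (m+1+1) u v x y) (Fin.last (m+1)) j *
          ((JBmat (m+1+1) u v x y).submatrix (Fin.last (m+1)).succAbove j.succAbove).det = 0 := by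
      intro j _ hj
      simp only [mem_insert, mem_singleton, not_or] at hj
      obtain ⟨hj0, hj1, hjl⟩ := hj
      have hv0 : (j : ℕ) ≠ 0 := fun h => hj0 (Fin.ext (by simp [h, h0]))
      have hv1 : (j : ℕ) ≠ 1 := fun h => hj1 (Fin.ext (by simp [h, h1]))
      have hvl : (j : ℕ) ≠ m+1 := fun h => hjl (Fin.ext (by simp [h]))
      have hjlt : (j : ℕ) < m + 1 + 1 := j.isLt
      have : (JBmat (m+1+1) u v x y) (Fin.last (m+1)) j = 0 := by
        simp only [JBmat, Matrix.of_apply, Fin.val_last]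
        rw [if_neg hv0, if_neg hv1, if_neg (by omega), if_neg (by omega)]
      rw [this]; ring
    rw [← Finset.sum_subset (Finset.subset_univ _) hzero]
    have hne01 : (0 : Fin (m+1+1)) ≠ 1 := by
      intro h; have := congrArg Fin.val h; rw [h0, h1] at this; omega
    have hne0l : (0 : Fin (m+1+1)) ≠ Fin.last (m+1) := by
      intro h; have := congrArg Fin.val h; simp [h0] at this
    have hne1l : (1 : Fin (m+1+1)) ≠ Fin.last (m+1) := by
      intro h; have := congrArg Fin.val h; rw [h1] at this; simp at this; omega
    rw [Finset.sum_insert (by simp [hne01, hne0l]),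
        Finset.sum_insert (by simp [hne1l]), Finset.sum_singleton]
    -- entries of the last row
    have e0 : (JBmat (m+1+1) u v x y) (Fin.last (m+1)) 0 = u (m+1) := by
      simp [JBmat, h0]
    have e1 : (JBmat (m+1+1) u v x y) (Fin.last (m+1)) 1 = v (m+1) := by
      simp only [JBmat, Matrix.of_apply, h1, Fin.val_last]
      rw [if_neg (show ¬(1 = 0) by omega)]
      simp
    have el : (JBmat (m+1+1) u v x y) (Fin.last (m+1)) (Fin.last (m+1)) = x := by
      simp only [JBmat, Matrix.of_apply, Fin.val_last]
      rw [if_neg (show ¬(m+1 = 0) by omega), if_neg (show ¬(m+1 = 1) by omega)]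
      simp
    rw [e0, e1, el, JB_minor_last, IH,
      JB_minor_zero_det (m+1) (by omega) u v x y,
      JB_minor_one_det (m+1) (by omega) u v x y]
    simp only [Fin.val_last, h0, h1, Nat.add_zero, Nat.add_sub_cancel]
    rw [Finset.sum_Icc_succ_top (show 1 ≤ m + 1 by omega)]
    have hsum : x * (∑ k ∈ Icc 1 m,
        (-1:ℝ)^(k+1) * y^(k-1) * x^(m-k) * (u 0 * v k - v 0 * u k))
        = ∑ k ∈ Icc 1 m, (-1:ℝ)^(k+1) * y^(k-1) * x^(m+1-k) * (u 0 * v k - v 0 * u k) := by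
      rw [Finset.mul_sum]
      refine Finset.sum_congr rfl fun k hk => ?_
      rw [Finset.mem_Icc] at hk
      rw [show m+1-k = (m-k)+1 by omega, pow_succ]
      ring
    rw [← hsum]
    rw [show (-1:ℝ)^((m+1)+(m+1)) = 1 from Even.neg_one_pow ⟨m+1, rfl⟩,
        show ((m+1)+1) = (m+2) from rfl,
        show (-1:ℝ)^(m+2) = (-1)^(m+1) * (-1) from pow_succ _ _,
        Nat.sub_self, pow_zero, Nat.add_sub_cancel]
    ring

lemma Jkey (n : ℕ) (hn : 3 < n) (J : ℕ → ℝ)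
    (hJ1 : J 1 = 1) (hJ2 : J 2 = 1)
    (hrec : ∀ k, 3 ≤ k → J k = J (k - 1) + 2 * J (k - 2))
    (i j : ℕ) (hi : i < n) (hj2 : 2 ≤ j) (hjn : j < n) :
    J ((j + n - i) % n + 1) - J ((j - 1 + n - i) % n + 1) -
      2 * J ((j - 2 + n - i) % n + 1) =
      if i = j then 1 - J (n + 1) else if i + 1 = j then -(2 * J n) else 0 := by
  by_cases hij : i = j
  · rw [if_pos hij]
    rw [show j + n - i = n by omega, Nat.mod_self,
        show j - 1 + n - i = n - 1 by omega, Nat.mod_eq_of_lt (by omega),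
        show j - 2 + n - i = n - 2 by omega, Nat.mod_eq_of_lt (by omega),
        show n - 1 + 1 = n by omega, show n - 2 + 1 = n - 1 by omega]
    rw [hrec (n + 1) (by omega), show n + 1 - 1 = n by omega,
        show n + 1 - 2 = n - 1 by omega, hJ1]
    ring
  · rw [if_neg hij]
    by_cases hij1 : i + 1 = j
    · rw [if_pos hij1]
      rw [show j + n - i = n + 1 by omega, Nat.add_mod_left, Nat.mod_eq_of_lt (by omega),
          show j - 1 + n - i = n by omega, Nat.mod_self,
          show j - 2 + n - i = n - 1 by omega, Nat.mod_eq_of_lt (by omega),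
          show n - 1 + 1 = n by omega, hJ1, hJ2]
      ring
    · rw [if_neg hij1]
      obtain ⟨d, hd2, hdn, h1, h2, h3⟩ :
          ∃ d, 2 ≤ d ∧ d < n ∧ (j + n - i) % n = d ∧ (j - 1 + n - i) % n = d - 1 ∧
            (j - 2 + n - i) % n = d - 2 := by
        rcases lt_or_gt_of_ne hij with h | h
        · refine ⟨j - i, by omega, by omega, ?_, ?_, ?_⟩
          · rw [show j + n - i = (j - i) + n by omega, Nat.add_mod_right,
              Nat.mod_eq_of_lt (by omega)]
          · rw [show j - 1 + n - i = (j - i - 1) + n by omega, Nat.add_mod_right,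
              Nat.mod_eq_of_lt (by omega)]
          · rw [show j - 2 + n - i = (j - i - 2) + n by omega, Nat.add_mod_right,
              Nat.mod_eq_of_lt (by omega)]
        · refine ⟨j + n - i, by omega, by omega, ?_, ?_, ?_⟩
          · rw [Nat.mod_eq_of_lt (by omega)]
          · rw [Nat.mod_eq_of_lt (by omega)]; omega
          · rw [Nat.mod_eq_of_lt (by omega)]; omega
      rw [h1, h2, h3, show d - 1 + 1 = d by omega, show d - 2 + 1 = d - 1 by omega,
          hrec (d + 1) (by omega), show d + 1 - 1 = d by omega,
          show d + 1 - 2 = d - 1 by omega]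
      ring

lemma mul_JEmat (n : ℕ) (hn : 3 < n) (J : ℕ → ℝ)
    (hJ1 : J 1 = 1) (hJ2 : J 2 = 1)
    (hrec : ∀ k, 3 ≤ k → J k = J (k - 1) + 2 * J (k - 2)) :
    (Matrix.of fun i j : Fin n => J (((j : ℕ) + n - (i : ℕ)) % n + 1)) * JEmat n =
      JBmat n (fun i => J ((n - i) % n + 1)) (fun i => J ((n + 1 - i) % n + 1))
        (1 - J (n + 1)) (-(2 * J n)) := by
  ext i j
  rw [Matrix.mul_apply]
  set A : Matrix (Fin n) (Fin n) ℝ :=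
    Matrix.of fun i j : Fin n => J (((j : ℕ) + n - (i : ℕ)) % n + 1) with hA
  have expand : ∀ k : Fin n, A i k * JEmat n k j =
      (if k = j then J (((j : ℕ) + n - (i : ℕ)) % n + 1) else 0) +
      ((if 2 ≤ (j : ℕ) ∧ (k : ℕ) + 1 = (j : ℕ) then
          -J (((k : ℕ) + n - (i : ℕ)) % n + 1) else 0) +
       (if (k : ℕ) + 2 = (j : ℕ) then
          -(2 * J (((k : ℕ) + n - (i : ℕ)) % n + 1)) else 0)) := by
    intro k
    show J (((k : ℕ) + n - (i : ℕ)) % n + 1) *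
      ((if (k : ℕ) = (j : ℕ) then 1 else 0) +
       (if 2 ≤ (j : ℕ) ∧ (k : ℕ) + 1 = (j : ℕ) then -1 else 0) +
       (if (k : ℕ) + 2 = (j : ℕ) then -2 else 0)) = _
    by_cases h1 : k = j
    · subst h1
      rw [if_pos rfl, if_pos rfl, if_neg (by omega), if_neg (by omega),
        if_neg (by omega), if_neg (by omega)]
      ring
    · have hv : ¬((k : ℕ) = (j : ℕ)) := fun h => h1 (Fin.ext h)
      rw [if_neg hv, if_neg h1]
      by_cases h2 : 2 ≤ (j : ℕ) ∧ (k : ℕ) + 1 = (j : ℕ)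
      · rw [if_pos h2, if_pos h2, if_neg (by omega), if_neg (by omega)]
        ring
      · rw [if_neg h2, if_neg h2]
        by_cases h3 : (k : ℕ) + 2 = (j : ℕ)
        · rw [if_pos h3, if_pos h3]
          ring
        · rw [if_neg h3, if_neg h3]
          ring
  simp only [expand]
  rw [Finset.sum_add_distrib, Finset.sum_add_distrib, Finset.sum_ite_eq' univ j]
  rw [if_pos (Finset.mem_univ j)]
  -- now handle cases on j
  by_cases hj0 : (j : ℕ) = 0
  · have hs2 : ∀ k : Fin n, ¬(2 ≤ (j : ℕ) ∧ (k : ℕ) + 1 = (j : ℕ)) := by intro k; omega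
    have hs3 : ∀ k : Fin n, ¬((k : ℕ) + 2 = (j : ℕ)) := by intro k; omega
    rw [Finset.sum_eq_zero (fun k _ => if_neg (hs2 k)),
        Finset.sum_eq_zero (fun k _ => if_neg (hs3 k))]
    show J (((j : ℕ) + n - (i : ℕ)) % n + 1) + (0 + 0) =
      JBmat n (fun i => J ((n - i) % n + 1)) (fun i => J ((n + 1 - i) % n + 1))
        (1 - J (n + 1)) (-(2 * J n)) i j
    rw [show ((JBmat n (fun i => J ((n - i) % n + 1)) (fun i => J ((n + 1 - i) % n + 1))
        (1 - J (n + 1)) (-(2 * J n))) i j) = J ((n - (i : ℕ)) % n + 1) by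
      simp only [JBmat, Matrix.of_apply]; rw [if_pos hj0]]
    rw [hj0, show 0 + n - (i : ℕ) = n - (i : ℕ) by omega]
    ring
  · by_cases hj1 : (j : ℕ) = 1
    · have hs2 : ∀ k : Fin n, ¬(2 ≤ (j : ℕ) ∧ (k : ℕ) + 1 = (j : ℕ)) := by intro k; omega
      have hs3 : ∀ k : Fin n, ¬((k : ℕ) + 2 = (j : ℕ)) := by intro k; omega
      rw [Finset.sum_eq_zero (fun k _ => if_neg (hs2 k)),
          Finset.sum_eq_zero (fun k _ => if_neg (hs3 k))]
      rw [show ((JBmat n (fun i => J ((n - i) % n + 1)) (fun i => J ((n + 1 - i) % n + 1))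
          (1 - J (n + 1)) (-(2 * J n))) i j) = J ((n + 1 - (i : ℕ)) % n + 1) by
        simp only [JBmat, Matrix.of_apply]; rw [if_neg hj0, if_pos hj1]]
      rw [hj1, show 1 + n - (i : ℕ) = n + 1 - (i : ℕ) by omega]
      ring
    · have hj2 : 2 ≤ (j : ℕ) := by omega
      -- second sum
      have hS2 : (∑ k : Fin n, if 2 ≤ (j : ℕ) ∧ (k : ℕ) + 1 = (j : ℕ) then
          -J (((k : ℕ) + n - (i : ℕ)) % n + 1) else 0) =
          -J (((j : ℕ) - 1 + n - (i : ℕ)) % n + 1) := by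
        rw [Finset.sum_eq_single (⟨(j : ℕ) - 1, by omega⟩ : Fin n)]
        · rw [if_pos ⟨hj2, by simp; omega⟩]
        · intro b _ hb
          refine if_neg (fun hc => hb (Fin.ext ?_))
          simp
          omega
        · intro h; exact absurd (Finset.mem_univ _) h
      have hS3 : (∑ k : Fin n, if (k : ℕ) + 2 = (j : ℕ) then
          -(2 * J (((k : ℕ) + n - (i : ℕ)) % n + 1)) else 0) =
          -(2 * J (((j : ℕ) - 2 + n - (i : ℕ)) % n + 1)) := by
        rw [Finset.sum_eq_single (⟨(j : ℕ) - 2, by omega⟩ : Fin n)]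
        · rw [if_pos (by simp; omega)]
        · intro b _ hb
          refine if_neg (fun hc => hb (Fin.ext ?_))
          simp
          omega
        · intro h; exact absurd (Finset.mem_univ _) h
      rw [hS2, hS3]
      have hB : ((JBmat n (fun i => J ((n - i) % n + 1)) (fun i => J ((n + 1 - i) % n + 1))
          (1 - J (n + 1)) (-(2 * J n))) i j) =
          if (i : ℕ) = (j : ℕ) then 1 - J (n + 1)
          else if (i : ℕ) + 1 = (j : ℕ) then -(2 * J n) else 0 := by
        simp only [JBmat, Matrix.of_apply]; rw [if_neg hj0, if_neg hj1]
      rw [hB, ← Jkey n hn J hJ1 hJ2 hrec (i : ℕ) (j : ℕ) i.isLt hj2 j.isLt]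
      ring


/-- Bozkurt–Tam: determinant of the circulant matrix of the first `n` Jacobsthal numbers. -/
theorem det_circulant_jacobsthal (n : ℕ) (hn : 3 < n) (J : ℕ → ℝ)
    (hJ1 : J 1 = 1) (hJ2 : J 2 = 1)
    (hrec : ∀ k, 3 ≤ k → J k = J (k - 1) + 2 * J (k - 2)) :
    Matrix.det (Matrix.of fun i j : Fin n => J (((j : ℕ) + n - (i : ℕ)) % n + 1)) =
      (1 - J n) * (1 - J (n + 1)) ^ (n - 2) +
        ∑ k ∈ Finset.Icc 2 (n - 1),
          (J (k + 1) - J k) * (1 - J (n + 1)) ^ (k - 2) * (2 * J n) ^ (n - k) := by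
  have hd : (Matrix.of fun i j : Fin n => J (((j : ℕ) + n - (i : ℕ)) % n + 1)).det
      = (JBmat n (fun i => J ((n - i) % n + 1)) (fun i => J ((n + 1 - i) % n + 1))
          (1 - J (n + 1)) (-(2 * J n))).det := by
    rw [← mul_JEmat n hn J hJ1 hJ2 hrec, Matrix.det_mul, det_JEmat, mul_one]
  rw [hd, det_JBmat _ _ _ _ n (by omega)]
  have hu0 : J ((n - (0:ℕ)) % n + 1) = 1 := by
    rw [Nat.sub_zero, Nat.mod_self, hJ1]
  have hv0 : J ((n + 1 - (0:ℕ)) % n + 1) = 1 := by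
    rw [Nat.sub_zero, Nat.add_mod_left, Nat.mod_eq_of_lt (by omega), hJ2]
  rw [show (Finset.Icc 1 (n-1)) = insert 1 (Finset.Icc 2 (n-1)) by
    ext a; simp only [Finset.mem_Icc, Finset.mem_insert]; omega]
  rw [Finset.sum_insert (by simp only [Finset.mem_Icc]; omega)]
  congr 1
  · -- the k = 1 term
    simp only [hu0, hv0]
    rw [show n + 1 - 1 = n by omega, Nat.mod_self, hJ1]
    rw [show (n - 1) % n = n - 1 from Nat.mod_eq_of_lt (by omega),
        show n - 1 + 1 = n by omega]
    rw [show n - 1 - 1 = n - 2 by omega]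
    norm_num
    ring
  · refine Finset.sum_nbij' (fun k => n + 1 - k) (fun k => n + 1 - k) ?_ ?_ ?_ ?_ ?_
    · intro a ha; simp only [Finset.mem_Icc] at *; omega
    · intro a ha; simp only [Finset.mem_Icc] at *; omega
    · intro a ha; simp only [Finset.mem_Icc] at ha; show n + 1 - (n + 1 - a) = a; omega
    · intro a ha; simp only [Finset.mem_Icc] at ha; show n + 1 - (n + 1 - a) = a; omega
    · intro a ha
      simp only [Finset.mem_Icc] at ha
      simp only [hu0, hv0]
      rw [show (n + 1 - a) % n = n + 1 - a from Nat.mod_eq_of_lt (by omega),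
          show (n - a) % n = n - a from Nat.mod_eq_of_lt (by omega),
          show n + 1 - a + 1 = n + 2 - a by omega,
          show n - a + 1 = n + 1 - a by omega]
      rw [show n + 1 - a - 2 = n - 1 - a by omega,
          show n - (n + 1 - a) = a - 1 by omega]
      have hsign : ((-1:ℝ))^(a+1) * (-(2 * J n))^(a-1) = (2 * J n)^(a-1) := by
        rw [show (-(2 * J n)) = (-1) * (2 * J n) by ring, mul_pow, ← mul_assoc, ← pow_add,
            show (a+1)+(a-1) = 2*a by omega, pow_mul]
        norm_num
      rw [hsign]
      ring
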